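/- Let n ≥ 2 and let D_{2n} be the dihedral group of order 2n. The poset Iso(D_{2n}) is a lattice (i.e., every pair of classes has a greatest lower bound and a least upper bound in Iso(D_{2n})) if and only if n is odd or n is a power of 2. -/

import Mathlib

/-- The setoid on subgroups of `G` given by group isomorphism. -/
def isoSetoid (G : Type*) [Group G] : Setoid (Subgroup G) where
  r H K := Nonempty (H ≃* K)
  iseqv := ⟨fun H => ⟨MulEquiv.refl H⟩, fun ⟨e⟩ => ⟨e.symm⟩, fun ⟨e⟩ ⟨f⟩ => ⟨e.trans f⟩⟩

/-- `IsoClasses G` is the set of equivalence classes of subgroups of `G`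
under group isomorphism. -/
def IsoClasses (G : Type*) [Group G] : Type _ := Quotient (isoSetoid G)

/-- The class of a subgroup `H` in `IsoClasses G`. -/
def IsoCls {G : Type*} [Group G] (H : Subgroup G) : IsoClasses G :=
  Quotient.mk (isoSetoid G) H

/-- `[H] ≤ [K]` iff some member of `[H]` is contained in some member of `[K]`. -/
instance instLEIsoClasses (G : Type*) [Group G] : LE (IsoClasses G) where
  le x y := ∃ H K : Subgroup G, IsoCls H = x ∧ IsoCls K = y ∧ H ≤ K


/-- The pair `x, y` has a greatest lower bound in `IsoClasses G`. -/
def IsoClasses.HasGLB {G : Type*} [Group G] (x y : IsoClasses G) : Prop :=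
  ∃ z : IsoClasses G, z ≤ x ∧ z ≤ y ∧ ∀ w : IsoClasses G, w ≤ x → w ≤ y → w ≤ z

/-- The pair `x, y` has a least upper bound in `IsoClasses G`. -/
def IsoClasses.HasLUB {G : Type*} [Group G] (x y : IsoClasses G) : Prop :=
  ∃ z : IsoClasses G, x ≤ z ∧ y ≤ z ∧ ∀ w : IsoClasses G, x ≤ w → y ≤ w → z ≤ w

/-- The poset `IsoClasses G` is a lattice: every pair of classes has a greatest lower
bound and a least upper bound. -/
def IsoClasses.IsLattice (G : Type*) [Group G] : Prop :=
  ∀ x y : IsoClasses G, IsoClasses.HasGLB x y ∧ IsoClasses.HasLUB x y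

set_option linter.unusedSectionVars false

namespace DihedralLattice
open AddSubgroup DihedralGroup


lemma zmultiples_natCast_gcd (n a : ℕ) :
    zmultiples ((a : ZMod n)) = zmultiples ((Nat.gcd n a : ZMod n)) := by
  apply le_antisymm
  · rw [zmultiples_le]
    obtain ⟨t, ht⟩ : Nat.gcd n a ∣ a := Nat.gcd_dvd_right n a
    refine ⟨(t : ℤ), ?_⟩
    calc (t : ℤ) • ((Nat.gcd n a : ZMod n)) = ((Nat.gcd n a * t : ℕ) : ZMod n) := by
          rw [zsmul_eq_mul]; push_cast; ring
      _ = (a : ZMod n) := by rw [← ht]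
  · rw [zmultiples_le]
    refine ⟨Nat.gcdB n a, ?_⟩
    have h := Nat.gcd_eq_gcd_ab n a
    have h2 : ((Nat.gcd n a : ℤ) : ZMod n) = (((n : ℤ) * Nat.gcdA n a + (a : ℤ) * Nat.gcdB n a : ℤ) : ZMod n) := by
      rw [← h]
    push_cast at h2 ⊢
    rw [h2]
    simp [ZMod.natCast_self]
    ring

lemma addsubgroup_zmod_eq (n : ℕ) [NeZero n] (Z : AddSubgroup (ZMod n)) :
    ∃ k : ℕ, k ∣ n ∧ Z = zmultiples ((k : ZMod n)) := by
  obtain ⟨g, hg⟩ := IsAddCyclic.exists_generator (α := Z)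
  have hZ : Z = zmultiples ((g : ZMod n)) := by
    apply le_antisymm
    · intro x hx
      obtain ⟨j, hj⟩ := hg ⟨x, hx⟩
      exact ⟨j, by simpa using congrArg Subtype.val hj⟩
    · rw [zmultiples_le]
      exact g.2
  refine ⟨Nat.gcd n (g : ZMod n).val, Nat.gcd_dvd_left _ _, ?_⟩
  have h2 := zmultiples_natCast_gcd n (g : ZMod n).val
  rw [ZMod.natCast_zmod_val] at h2
  exact hZ.trans h2


lemma natCast_mem_zmultiples_natCast (n a b : ℕ) (h : a ∣ b) :
    ((b : ZMod n)) ∈ zmultiples ((a : ZMod n)) := by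
  obtain ⟨c, rfl⟩ := h
  refine ⟨(c : ℤ), ?_⟩
  show (c : ℤ) • ((a : ZMod n)) = _
  rw [zsmul_eq_mul]; push_cast; ring

/-- The canonical subgroup of `ZMod n` of order `d` (for `d ∣ n`). -/
def Zk (n d : ℕ) : AddSubgroup (ZMod n) := zmultiples (((n / d : ℕ) : ZMod n))

lemma div_dvd_div {n d e : ℕ} (hde : d ∣ e) (he : e ∣ n) : n / e ∣ n / d := by
  rcases Nat.eq_zero_or_pos n with rfl | hn
  · simp
  rcases Nat.eq_zero_or_pos d with rfl | hdpos
  · simp_all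
  obtain ⟨t, rfl⟩ := hde
  obtain ⟨s, hs⟩ := he
  have hd : d ≠ 0 := hdpos.ne'
  have : n / d = t * s := by
    rw [hs, Nat.mul_assoc, Nat.mul_div_cancel_left _ hdpos]
  have ht : 0 < t := by
    rcases Nat.eq_zero_or_pos t with rfl | h
    · rw [Nat.mul_zero] at hs; omega
    · exact h
  rw [this, hs, Nat.mul_div_cancel_left _ (Nat.mul_pos hdpos ht)]
  exact Dvd.intro_left t rfl

lemma Zk_mono {n d e : ℕ} (hde : d ∣ e) (he : e ∣ n) : Zk n d ≤ Zk n e := by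
  rw [Zk, Zk, zmultiples_le]
  exact natCast_mem_zmultiples_natCast n _ _ (div_dvd_div hde he)

lemma card_Zk {n d : ℕ} [NeZero n] (hd : d ∣ n) : Nat.card (Zk n d) = d := by
  rw [Zk, Nat.card_zmultiples, ZMod.addOrderOf_coe _ (NeZero.ne n)]
  have h1 : Nat.gcd n (n / d) = n / d :=
    Nat.gcd_eq_right (Nat.div_dvd_of_dvd hd)
  rw [h1, Nat.div_div_self hd (NeZero.ne n)]

lemma mem_Zk_iff {n d : ℕ} {z : ZMod n} :
    z ∈ Zk n d ↔ ∃ j : ℤ, j • (((n / d : ℕ) : ZMod n)) = z := Iff.rfl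



section Dihedral

variable {n : ℕ}

lemma r_inv (i : ZMod n) : (r i)⁻¹ = r (-i) := rfl

lemma r_pow (i : ZMod n) (k : ℕ) : (r i) ^ k = r (k • i) := by
  induction k with
  | zero => simp
  | succ k ih => rw [pow_succ, ih, r_mul_r, succ_nsmul]

lemma r_zpow (i : ZMod n) (j : ℤ) : (r i) ^ j = r (j • i) := by
  rcases j with k | k
  · rw [Int.ofNat_eq_coe, zpow_natCast, r_pow, natCast_zsmul]
  · rw [zpow_negSucc, r_pow, r_inv, ← neg_nsmul, negSucc_zsmul, neg_nsmul]

/-- The canonical cyclic subgroup of order `d` (for `d ∣ n`), consisting of rotations. -/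
def CC (n d : ℕ) : Subgroup (DihedralGroup n) where
  carrier := {x | ∃ z ∈ Zk n d, x = r z}
  one_mem' := ⟨0, zero_mem _, one_def⟩
  mul_mem' := by
    rintro x y ⟨z, hz, rfl⟩ ⟨w, hw, rfl⟩
    exact ⟨z + w, add_mem hz hw, (r_mul_r z w).symm⟩
  inv_mem' := by
    rintro x ⟨z, hz, rfl⟩
    exact ⟨-z, neg_mem hz, r_inv z⟩

/-- The canonical dihedral subgroup of order `2m` (for `m ∣ n`). -/
def DD (n m : ℕ) : Subgroup (DihedralGroup n) where
  carrier := {x | ∃ z ∈ Zk n m, x = r z ∨ x = sr z}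
  one_mem' := ⟨0, zero_mem _, Or.inl one_def⟩
  mul_mem' := by
    rintro x y ⟨z, hz, rfl | rfl⟩ ⟨w, hw, rfl | rfl⟩
    · exact ⟨z + w, add_mem hz hw, Or.inl (r_mul_r z w).symm⟩
    · exact ⟨w - z, sub_mem hw hz, Or.inr (r_mul_sr z w).symm⟩
    · exact ⟨z + w, add_mem hz hw, Or.inr (sr_mul_r z w).symm⟩
    · exact ⟨w - z, sub_mem hw hz, Or.inl (sr_mul_sr z w).symm⟩
  inv_mem' := by
    rintro x ⟨z, hz, rfl | rfl⟩
    · exact ⟨-z, neg_mem hz, Or.inl (r_inv z)⟩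
    · exact ⟨z, hz, Or.inr rfl⟩

lemma mem_CC {d : ℕ} {x : DihedralGroup n} : x ∈ CC n d ↔ ∃ z ∈ Zk n d, x = r z := Iff.rfl

lemma mem_DD {m : ℕ} {x : DihedralGroup n} :
    x ∈ DD n m ↔ ∃ z ∈ Zk n m, x = r z ∨ x = sr z := Iff.rfl

lemma CC_eq_zpowers (n d : ℕ) : CC n d = Subgroup.zpowers (r (((n / d : ℕ) : ZMod n))) := by
  ext x
  rw [mem_CC, Subgroup.mem_zpowers_iff]
  constructor
  · rintro ⟨z, ⟨j, rfl⟩, rfl⟩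
    exact ⟨j, (r_zpow _ j).symm ▸ rfl⟩
  · rintro ⟨j, rfl⟩
    exact ⟨j • _, ⟨j, rfl⟩, r_zpow _ j⟩

lemma isCyclic_zpowers {G : Type*} [Group G] (g : G) : IsCyclic (Subgroup.zpowers g) := by
  refine ⟨⟨g, Subgroup.mem_zpowers g⟩, fun x => ?_⟩
  obtain ⟨j, hj⟩ := Subgroup.mem_zpowers_iff.mp x.2
  refine ⟨j, Subtype.ext ?_⟩
  rw [SubgroupClass.coe_zpow]
  exact hj

lemma isCyclic_CC (n d : ℕ) : IsCyclic (CC n d) := by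
  rw [CC_eq_zpowers]; exact isCyclic_zpowers _

lemma card_CC [NeZero n] {d : ℕ} (hd : d ∣ n) : Nat.card (CC n d) = d := by
  rw [CC_eq_zpowers, Nat.card_zpowers, orderOf_r, ZMod.val_natCast]
  have h1 : Nat.gcd n ((n / d) % n) = n / d := by
    rw [Nat.gcd_comm, ← Nat.gcd_rec]
    exact Nat.gcd_eq_right (Nat.div_dvd_of_dvd hd)
  rw [h1, Nat.div_div_self hd (NeZero.ne n)]

end Dihedral



section Phi

variable {n : ℕ} [NeZero n]

lemma neZero_of_dvd {m : ℕ} (hm : m ∣ n) : NeZero m :=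
  ⟨fun h => NeZero.ne n (Nat.eq_zero_of_zero_dvd (h ▸ hm))⟩

/-- The additive embedding `ZMod m →+ ZMod n` sending `1` to `n/m`. -/
def fmap (n : ℕ) {m : ℕ} (hm : m ∣ n) : ZMod m →+ ZMod n :=
  ZMod.lift m ⟨(zmultiplesHom (ZMod n)) (((n / m : ℕ) : ZMod n)), by
    show (m : ℤ) • (((n / m : ℕ) : ZMod n)) = 0
    rw [natCast_zsmul, nsmul_eq_mul, ← Nat.cast_mul, Nat.mul_div_cancel' hm,
      ZMod.natCast_self]⟩

lemma fmap_intCast {m : ℕ} (hm : m ∣ n) (j : ℤ) :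
    fmap n hm ((j : ZMod m)) = j • (((n / m : ℕ) : ZMod n)) :=
  ZMod.lift_coe _ _ j

lemma fmap_natCast {m : ℕ} (hm : m ∣ n) (j : ℕ) :
    fmap n hm ((j : ZMod m)) = j • (((n / m : ℕ) : ZMod n)) := by
  have := fmap_intCast hm (j : ℤ)
  rwa [Int.cast_natCast, natCast_zsmul] at this

lemma fmap_apply {m : ℕ} (hm : m ∣ n) (i : ZMod m) :
    fmap n hm i = i.val • (((n / m : ℕ) : ZMod n)) := by
  haveI := neZero_of_dvd hm
  conv_lhs => rw [← ZMod.natCast_zmod_val i]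
  exact fmap_natCast hm i.val

lemma fmap_mem_Zk {m : ℕ} (hm : m ∣ n) (i : ZMod m) : fmap n hm i ∈ Zk n m := by
  rw [fmap_apply hm i]
  exact nsmul_mem (mem_zmultiples _) _

lemma fmap_inj {m : ℕ} (hm : m ∣ n) : Function.Injective (fmap n hm) := by
  haveI := neZero_of_dvd hm
  rw [injective_iff_map_eq_zero]
  intro i hi
  rw [fmap_apply hm i, nsmul_eq_mul, ← Nat.cast_mul,
    ZMod.natCast_eq_zero_iff] at hi
  have hmn : 0 < n / m := Nat.div_pos (Nat.le_of_dvd (NeZero.pos n) hm) (NeZero.pos m)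
  rw [mul_comm] at hi
  have h2 : (n / m) * m ∣ (n / m) * i.val := by
    rw [Nat.div_mul_cancel hm]; exact hi
  have h3 : m ∣ i.val := (mul_dvd_mul_iff_left hmn.ne').mp h2
  have h4 : i.val = 0 := Nat.eq_zero_of_dvd_of_lt h3 (ZMod.val_lt i)
  exact (ZMod.val_eq_zero i).mp h4

/-- The function underlying the embedding `DihedralGroup m →* DihedralGroup n`. -/
def phiFun (n : ℕ) {m : ℕ} (hm : m ∣ n) (a : ZMod n) :
    DihedralGroup m → DihedralGroup n
  | .r i => .r (fmap n hm i)
  | .sr i => .sr (a + fmap n hm i)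

@[simp] lemma phiFun_r {m : ℕ} (hm : m ∣ n) (a : ZMod n) (i : ZMod m) :
    phiFun n hm a (r i) = r (fmap n hm i) := rfl

@[simp] lemma phiFun_sr {m : ℕ} (hm : m ∣ n) (a : ZMod n) (i : ZMod m) :
    phiFun n hm a (sr i) = sr (a + fmap n hm i) := rfl

/-- The embedding `DihedralGroup m →* DihedralGroup n` hitting the reflection `sr a`. -/
def phi (n : ℕ) {m : ℕ} (hm : m ∣ n) (a : ZMod n) :
    DihedralGroup m →* DihedralGroup n :=
  MonoidHom.mk' (phiFun n hm a) (by
    rintro (i | i) (j | j) <;>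
      simp [phiFun, map_add, map_sub] <;> ring)

lemma phi_r {m : ℕ} (hm : m ∣ n) (a : ZMod n) (i : ZMod m) :
    phi n hm a (r i) = r (fmap n hm i) := rfl

lemma phi_sr {m : ℕ} (hm : m ∣ n) (a : ZMod n) (i : ZMod m) :
    phi n hm a (sr i) = sr (a + fmap n hm i) := rfl

lemma phi_inj {m : ℕ} (hm : m ∣ n) (a : ZMod n) : Function.Injective (phi n hm a) := by
  rw [injective_iff_map_eq_one]
  rintro (i | i) h
  · rw [phi_r, one_def, r.injEq] at h
    have : i = 0 := fmap_inj hm (by rw [map_zero]; exact h)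
    rw [this]; exact one_def.symm
  · rw [phi_sr, one_def] at h
    exact absurd h (fun h' => by cases h')

lemma mem_phi_range {m : ℕ} (hm : m ∣ n) (a : ZMod n) (x : DihedralGroup n) :
    x ∈ (phi n hm a).range ↔ ∃ z ∈ Zk n m, x = r z ∨ x = sr (a + z) := by
  constructor
  · rintro ⟨(i | i), rfl⟩
    · exact ⟨fmap n hm i, fmap_mem_Zk hm i, Or.inl (phi_r hm a i)⟩
    · exact ⟨fmap n hm i, fmap_mem_Zk hm i, Or.inr (phi_sr hm a i)⟩
  · rintro ⟨z, ⟨j, rfl⟩, rfl | rfl⟩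
    · exact ⟨r ((j : ZMod m)), by rw [phi_r, fmap_intCast]⟩
    · exact ⟨sr ((j : ZMod m)), by rw [phi_sr, fmap_intCast]⟩

end Phi

section Structure

variable {n : ℕ} [NeZero n]

lemma CC_mono {d e : ℕ} (hde : d ∣ e) (he : e ∣ n) : CC n d ≤ CC n e := by
  rintro x ⟨z, hz, rfl⟩
  exact ⟨z, Zk_mono hde he hz, rfl⟩

lemma CC_le_DD {d m : ℕ} (hdm : d ∣ m) (hm : m ∣ n) : CC n d ≤ DD n m := by
  rintro x ⟨z, hz, rfl⟩
  exact ⟨z, Zk_mono hdm hm hz, Or.inl rfl⟩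

lemma DD_mono {m m' : ℕ} (hmm : m ∣ m') (hm' : m' ∣ n) : DD n m ≤ DD n m' := by
  rintro x ⟨z, hz, hx⟩
  exact ⟨z, Zk_mono hmm hm' hz, hx⟩

lemma phi_range_eq_DD {m : ℕ} (hm : m ∣ n) : (phi n hm 0).range = DD n m := by
  ext x
  rw [mem_phi_range, mem_DD]
  simp only [zero_add]

/-- The canonical subgroup `DD n m` is isomorphic to the dihedral group of order `2m`. -/
noncomputable def DD_equiv {m : ℕ} (hm : m ∣ n) : DihedralGroup m ≃* DD n m :=
  (MonoidHom.ofInjective (phi_inj hm 0)).trans (MulEquiv.subgroupCongr (phi_range_eq_DD hm))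

lemma card_DD {m : ℕ} (hm : m ∣ n) : Nat.card (DD n m) = 2 * m := by
  haveI := neZero_of_dvd (n := n) hm
  rw [← Nat.card_congr (DD_equiv hm).toEquiv]
  exact DihedralGroup.nat_card

/-- The additive subgroup of rotation indices of a subgroup. -/
def rotPart (H : Subgroup (DihedralGroup n)) : AddSubgroup (ZMod n) where
  carrier := {i | r i ∈ H}
  zero_mem' := by
    show r 0 ∈ H
    rw [← one_def]
    exact H.one_mem
  add_mem' := by
    intro a b ha hb
    show r (a + b) ∈ H
    rw [← r_mul_r]
    exact H.mul_mem ha hb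
  neg_mem' := by
    intro a ha
    show r (-a) ∈ H
    rw [← r_inv]
    exact H.inv_mem ha

lemma mem_rotPart {H : Subgroup (DihedralGroup n)} {i : ZMod n} :
    i ∈ rotPart H ↔ r i ∈ H := Iff.rfl

/-- Structure theorem: every subgroup of the dihedral group is a canonical cyclic
subgroup of rotations, or the image of an embedding of a smaller dihedral group. -/
theorem subgroup_structure (H : Subgroup (DihedralGroup n)) :
    (∃ d, d ∣ n ∧ H = CC n d) ∨
      (∃ m, ∃ hm : m ∣ n, ∃ a, H = (phi n hm a).range) := by
  obtain ⟨k, hk, hZ⟩ := addsubgroup_zmod_eq n (rotPart H)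
  have hm : n / k ∣ n := Nat.div_dvd_of_dvd hk
  have hkm : n / (n / k) = k := Nat.div_div_self hk (NeZero.ne n)
  have hZk : rotPart H = Zk n (n / k) := by
    rw [Zk, hkm, hZ]
  by_cases hrefl : ∃ a, sr a ∈ H
  · obtain ⟨a, ha⟩ := hrefl
    refine Or.inr ⟨n / k, hm, a, ?_⟩
    ext x
    rw [mem_phi_range]
    constructor
    · intro hx
      rcases x with i | b
      · exact ⟨i, hZk ▸ (mem_rotPart.mpr hx), Or.inl rfl⟩
      · have hr : r (b - a) ∈ H := (sr_mul_sr a b) ▸ H.mul_mem ha hx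
        exact ⟨b - a, hZk ▸ (mem_rotPart.mpr hr), Or.inr (by rw [add_sub_cancel])⟩
    · rintro ⟨z, hz, rfl | rfl⟩
      · exact mem_rotPart.mp (hZk ▸ hz)
      · have hrz : r z ∈ H := mem_rotPart.mp (hZk ▸ hz)
        exact (sr_mul_r a z) ▸ H.mul_mem ha hrz
  · refine Or.inl ⟨n / k, hm, ?_⟩
    ext x
    rw [mem_CC]
    constructor
    · intro hx
      rcases x with i | b
      · exact ⟨i, hZk ▸ (mem_rotPart.mpr hx), rfl⟩
      · exact absurd ⟨b, hx⟩ hrefl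
    · rintro ⟨z, hz, rfl⟩
      exact mem_rotPart.mp (hZk ▸ hz)

lemma rotPart_phi_range {m : ℕ} (hm : m ∣ n) (a : ZMod n) :
    rotPart ((phi n hm a).range) = Zk n m := by
  ext i
  rw [mem_rotPart, mem_phi_range]
  constructor
  · rintro ⟨z, hz, h | h⟩
    · rw [r.injEq] at h
      exact h ▸ hz
    · exact absurd h (by simp)
  · intro hi
    exact ⟨i, hi, Or.inl rfl⟩

end Structure

section DihedralFacts

lemma orderOf_dihedral {m : ℕ} (hm : m ≠ 0) (x : DihedralGroup m) :
    orderOf x ∣ m ∨ orderOf x ∣ 2 := by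
  haveI : NeZero m := ⟨hm⟩
  rcases x with i | i
  · left
    rw [DihedralGroup.orderOf_r]
    exact Nat.div_dvd_of_dvd (Nat.gcd_dvd_left m i.val)
  · right
    rw [DihedralGroup.orderOf_sr]

lemma not_isCyclic_dihedral {m : ℕ} (hm : 2 ≤ m) : ¬ IsCyclic (DihedralGroup m) := by
  intro hcyc
  haveI : NeZero m := ⟨by omega⟩
  obtain ⟨g, hg⟩ := hcyc.exists_generator
  have hord : orderOf g = 2 * m := by
    have := orderOf_eq_card_of_forall_mem_zpowers hg
    rwa [DihedralGroup.nat_card] at this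
  rcases orderOf_dihedral (by omega) g with h | h <;> rw [hord] at h <;>
    have := Nat.le_of_dvd (by omega) h <;> omega

end DihedralFacts

section Classes

lemma isoCls_eq_iff {G : Type*} [Group G] {H K : Subgroup G} :
    IsoCls H = IsoCls K ↔ Nonempty (H ≃* K) :=
  ⟨fun h => Quotient.exact h, fun h => Quotient.sound h⟩

lemma isoClasses_le_def {G : Type*} [Group G] {x y : IsoClasses G} :
    x ≤ y ↔ ∃ H K : Subgroup G, IsoCls H = x ∧ IsoCls K = y ∧ H ≤ K := Iff.rfl

lemma isoCls_le_of_le {G : Type*} [Group G] {H K : Subgroup G} (h : H ≤ K) :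
    IsoCls H ≤ IsoCls K := ⟨H, K, rfl, rfl, h⟩

lemma isoClasses_exists_rep {G : Type*} [Group G] (x : IsoClasses G) :
    ∃ H : Subgroup G, IsoCls H = x := Quotient.exists_rep x

variable {n : ℕ} [NeZero n]

/-- The isomorphism class of the canonical cyclic subgroup of order `d`. -/
def cC (n d : ℕ) : IsoClasses (DihedralGroup n) := IsoCls (CC n d)

/-- The isomorphism class of the canonical dihedral subgroup of order `2 m`. -/
def cD (n m : ℕ) : IsoClasses (DihedralGroup n) := IsoCls (DD n m)

lemma cls_classify (H : Subgroup (DihedralGroup n)) :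
    (∃ d, d ∣ n ∧ IsoCls H = cC n d) ∨ (∃ m, m ∣ n ∧ IsoCls H = cD n m) := by
  rcases subgroup_structure H with ⟨d, hd, rfl⟩ | ⟨m, hm, a, rfl⟩
  · exact Or.inl ⟨d, hd, rfl⟩
  · refine Or.inr ⟨m, hm, isoCls_eq_iff.mpr ⟨?_⟩⟩
    exact (MonoidHom.ofInjective (phi_inj hm a)).symm.trans (DD_equiv hm)

lemma card_of_cls_cC {H : Subgroup (DihedralGroup n)} {d : ℕ} (hd : d ∣ n)
    (h : IsoCls H = cC n d) : Nat.card H = d := by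
  obtain ⟨e⟩ := isoCls_eq_iff.mp h
  rw [Nat.card_congr e.toEquiv, card_CC hd]

lemma cyclic_of_cls_cC {H : Subgroup (DihedralGroup n)} {d : ℕ}
    (h : IsoCls H = cC n d) : IsCyclic H := by
  obtain ⟨e⟩ := isoCls_eq_iff.mp h
  haveI := isCyclic_CC n d
  exact isCyclic_of_surjective e.symm.toMonoidHom e.symm.surjective

lemma card_of_cls_cD {H : Subgroup (DihedralGroup n)} {m : ℕ} (hm : m ∣ n)
    (h : IsoCls H = cD n m) : Nat.card H = 2 * m := by
  obtain ⟨e⟩ := isoCls_eq_iff.mp h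
  rw [Nat.card_congr e.toEquiv, card_DD hm]

lemma equiv_dihedral_of_cls_cD {H : Subgroup (DihedralGroup n)} {m : ℕ} (hm : m ∣ n)
    (h : IsoCls H = cD n m) : Nonempty (H ≃* DihedralGroup m) := by
  obtain ⟨e⟩ := isoCls_eq_iff.mp h
  exact ⟨e.trans (DD_equiv hm).symm⟩

lemma not_cyclic_of_cls_cD {H : Subgroup (DihedralGroup n)} {m : ℕ} (hm : m ∣ n)
    (hm2 : 2 ≤ m) (h : IsoCls H = cD n m) : ¬ IsCyclic H := by
  obtain ⟨e⟩ := equiv_dihedral_of_cls_cD hm h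
  intro hcyc
  exact not_isCyclic_dihedral hm2
    (isCyclic_of_surjective e.toMonoidHom e.surjective)

lemma le_cC_cC {d e : ℕ} (hd : d ∣ n) (he : e ∣ n) : cC n d ≤ cC n e ↔ d ∣ e := by
  constructor
  · rintro ⟨H, K, hH, hK, hle⟩
    have h1 := card_of_cls_cC hd hH
    have h2 := card_of_cls_cC he hK
    rw [← h1, ← h2]
    exact Subgroup.card_dvd_of_le hle
  · intro h
    exact isoCls_le_of_le (CC_mono h he)

lemma le_cD_cD {m m' : ℕ} (hm : m ∣ n) (hm' : m' ∣ n) : cD n m ≤ cD n m' ↔ m ∣ m' := by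
  constructor
  · rintro ⟨H, K, hH, hK, hle⟩
    have h1 := card_of_cls_cD hm hH
    have h2 := card_of_cls_cD hm' hK
    have := Subgroup.card_dvd_of_le hle
    rw [h1, h2] at this
    exact (mul_dvd_mul_iff_left (two_ne_zero)).mp this
  · intro h
    exact isoCls_le_of_le (DD_mono h hm')

lemma le_cC_cD {d m : ℕ} (hd : d ∣ n) (hm : m ∣ n) :
    cC n d ≤ cD n m ↔ d ∣ m ∨ d ∣ 2 := by
  haveI := neZero_of_dvd (n := n) hm
  constructor
  · rintro ⟨H, K, hH, hK, hle⟩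
    haveI := cyclic_of_cls_cC hH
    obtain ⟨g, hg⟩ := IsCyclic.exists_generator (α := H)
    have hord : orderOf g = d := by
      rw [orderOf_eq_card_of_forall_mem_zpowers hg, card_of_cls_cC hd hH]
    obtain ⟨e⟩ := equiv_dihedral_of_cls_cD hm hK
    have h1 : orderOf (Subgroup.inclusion hle g) = d := by
      rw [← hord]
      exact orderOf_injective (Subgroup.inclusion hle) (Subgroup.inclusion_injective hle) g
    have h2 : orderOf (e (Subgroup.inclusion hle g)) = d := by
      rw [← h1]
      exact orderOf_injective e.toMonoidHom e.injective _
    rw [← h2]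
    exact orderOf_dihedral (NeZero.ne m) _
  · intro h
    rcases h with h | h
    · exact ⟨CC n d, DD n m, rfl, rfl, CC_le_DD h hm⟩
    · rcases (Nat.dvd_prime Nat.prime_two).mp h with rfl | rfl
      · exact ⟨CC n 1, DD n m, rfl, rfl, CC_le_DD (one_dvd m) hm⟩
      · refine ⟨Subgroup.zpowers (sr 0), DD n m, ?_, rfl, ?_⟩
        · refine isoCls_eq_iff.mpr ⟨?_⟩
          haveI := isCyclic_zpowers (sr (0 : ZMod n))
          haveI := isCyclic_CC n 2
          refine mulEquivOfCyclicCardEq ?_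
          rw [Nat.card_zpowers, DihedralGroup.orderOf_sr, card_CC hd]
        · rw [Subgroup.zpowers_le]
          exact ⟨0, zero_mem _, Or.inr rfl⟩

lemma le_cD_cC {m e : ℕ} (hm : m ∣ n) (he : e ∣ n) :
    cD n m ≤ cC n e ↔ m = 1 ∧ 2 ∣ e := by
  constructor
  · rintro ⟨H, K, hH, hK, hle⟩
    haveI := cyclic_of_cls_cC hK
    have hcycH : IsCyclic H := Subgroup.isCyclic_of_le hle
    have hm1 : m = 1 := by
      by_contra hne
      have hm0 : m ≠ 0 := (neZero_of_dvd (n := n) hm).ne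
      exact not_cyclic_of_cls_cD hm (by omega) hH hcycH
    subst hm1
    refine ⟨rfl, ?_⟩
    have h1 := card_of_cls_cD hm hH
    have h2 := card_of_cls_cC he hK
    have := Subgroup.card_dvd_of_le hle
    rw [h1, h2, mul_one] at this
    exact this
  · rintro ⟨rfl, h2e⟩
    have h2n : (2 : ℕ) ∣ n := h2e.trans he
    refine ⟨CC n 2, CC n e, ?_, rfl, CC_mono h2e he⟩
    refine isoCls_eq_iff.mpr ⟨?_⟩
    haveI := isCyclic_CC n 2
    haveI : IsCyclic (DD n 1) := by
      have hcard : Nat.card (DD n 1) = 2 := by rw [card_DD (one_dvd n), mul_one]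
      haveI : Fact (Nat.Prime 2) := ⟨Nat.prime_two⟩
      exact isCyclic_of_prime_card hcard
    refine mulEquivOfCyclicCardEq ?_
    rw [card_CC h2n, card_DD (one_dvd n), mul_one]

end Classes

section NumberTheory

lemma pow2_total {n a b : ℕ} (hp : ∃ k, n = 2 ^ k) (ha : a ∣ n) (hb : b ∣ n) :
    a ∣ b ∨ b ∣ a := by
  obtain ⟨k, rfl⟩ := hp
  obtain ⟨i, hi, rfl⟩ := (Nat.dvd_prime_pow Nat.prime_two).mp ha
  obtain ⟨j, hj, rfl⟩ := (Nat.dvd_prime_pow Nat.prime_two).mp hb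
  rcases le_total i j with h | h
  · exact Or.inl (pow_dvd_pow 2 h)
  · exact Or.inr (pow_dvd_pow 2 h)

lemma odd_divisor_eq_one {n a : ℕ} (ho : Odd n) (ha : a ∣ n) (h2 : a ∣ 2) : a = 1 := by
  rcases (Nat.dvd_prime Nat.prime_two).mp h2 with rfl | rfl
  · rfl
  · obtain ⟨c, rfl⟩ := ha
    have := Nat.odd_iff.mp ho
    omega

lemma two_dvd_of_pow2 {n a : ℕ} (hp : ∃ k, n = 2 ^ k) (hn : 2 ≤ n) (ha : a ∣ n)
    (h1 : a ≠ 1) : 2 ∣ a := by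
  have h2n : 2 ∣ n := by
    obtain ⟨k, rfl⟩ := hp
    have hk : k ≠ 0 := by rintro rfl; omega
    exact dvd_pow_self 2 hk
  rcases pow2_total hp ha h2n with h | h
  · rcases (Nat.dvd_prime Nat.prime_two).mp h with rfl | rfl
    · exact absurd rfl h1
    · exact dvd_rfl
  · exact h

end NumberTheory

section Lattice

lemma hasGLB_symm {G : Type*} [Group G] {x y : IsoClasses G}
    (h : IsoClasses.HasGLB x y) : IsoClasses.HasGLB y x := by
  obtain ⟨z, h1, h2, h3⟩ := h
  exact ⟨z, h2, h1, fun w a b => h3 w b a⟩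

lemma hasLUB_symm {G : Type*} [Group G] {x y : IsoClasses G}
    (h : IsoClasses.HasLUB x y) : IsoClasses.HasLUB y x := by
  obtain ⟨z, h1, h2, h3⟩ := h
  exact ⟨z, h2, h1, fun w a b => h3 w b a⟩

variable {n : ℕ} [NeZero n]

lemma lcm_helper {d e μ : ℕ} (h : Odd n ∨ ∃ k, n = 2 ^ k) (hd : d ∣ n) (he : e ∣ n)
    (h1 : d ∣ μ ∨ d ∣ 2) (h2 : e ∣ μ ∨ e ∣ 2) :
    Nat.lcm d e ∣ μ ∨ Nat.lcm d e ∣ 2 := by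
  rcases h1 with h1 | h1 <;> rcases h2 with h2 | h2
  · exact Or.inl (Nat.lcm_dvd h1 h2)
  · -- d ∣ μ, e ∣ 2
    rcases h with ho | hp
    · have : e = 1 := odd_divisor_eq_one ho he h2
      subst this
      exact Or.inl (by rwa [Nat.lcm_one_right])
    · rcases pow2_total hp hd he with hde | hed
      · exact Or.inr (Nat.lcm_dvd (hde.trans h2) h2)
      · exact Or.inl (Nat.lcm_dvd h1 (hed.trans h1))
  · -- d ∣ 2, e ∣ μ
    rcases h with ho | hp
    · have : d = 1 := odd_divisor_eq_one ho hd h1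
      subst this
      exact Or.inl (by rwa [Nat.lcm_one_left])
    · rcases pow2_total hp hd he with hde | hed
      · exact Or.inl (Nat.lcm_dvd (hde.trans h2) h2)
      · exact Or.inr (Nat.lcm_dvd h1 (hed.trans h1))
  · exact Or.inr (Nat.lcm_dvd h1 h2)

lemma glbCC {d e : ℕ} (hd : d ∣ n) (he : e ∣ n) :
    IsoClasses.HasGLB (cC n d) (cC n e) := by
  have hg : Nat.gcd d e ∣ n := (Nat.gcd_dvd_left d e).trans hd
  refine ⟨cC n (Nat.gcd d e), (le_cC_cC hg hd).mpr (Nat.gcd_dvd_left d e),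
    (le_cC_cC hg he).mpr (Nat.gcd_dvd_right d e), ?_⟩
  intro w hwx hwy
  obtain ⟨W, rfl⟩ := isoClasses_exists_rep w
  rcases cls_classify W with ⟨f, hf, hW⟩ | ⟨μ, hμ, hW⟩ <;> rw [hW] at hwx hwy ⊢
  · exact (le_cC_cC hf hg).mpr
      (Nat.dvd_gcd ((le_cC_cC hf hd).mp hwx) ((le_cC_cC hf he).mp hwy))
  · obtain ⟨hμ1, h2d⟩ := (le_cD_cC hμ hd).mp hwx
    obtain ⟨-, h2e⟩ := (le_cD_cC hμ he).mp hwy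
    exact (le_cD_cC hμ hg).mpr ⟨hμ1, Nat.dvd_gcd h2d h2e⟩

lemma lubCC (h : Odd n ∨ ∃ k, n = 2 ^ k) {d e : ℕ} (hd : d ∣ n) (he : e ∣ n) :
    IsoClasses.HasLUB (cC n d) (cC n e) := by
  have hl : Nat.lcm d e ∣ n := Nat.lcm_dvd hd he
  refine ⟨cC n (Nat.lcm d e), (le_cC_cC hd hl).mpr (Nat.dvd_lcm_left d e),
    (le_cC_cC he hl).mpr (Nat.dvd_lcm_right d e), ?_⟩
  intro w hwx hwy
  obtain ⟨W, rfl⟩ := isoClasses_exists_rep w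
  rcases cls_classify W with ⟨f, hf, hW⟩ | ⟨μ, hμ, hW⟩ <;> rw [hW] at hwx hwy ⊢
  · exact (le_cC_cC hl hf).mpr
      (Nat.lcm_dvd ((le_cC_cC hd hf).mp hwx) ((le_cC_cC he hf).mp hwy))
  · exact (le_cC_cD hl hμ).mpr
      (lcm_helper h hd he ((le_cC_cD hd hμ).mp hwx) ((le_cC_cD he hμ).mp hwy))

lemma glbDD {m m' : ℕ} (hm : m ∣ n) (hm' : m' ∣ n) :
    IsoClasses.HasGLB (cD n m) (cD n m') := by
  have hg : Nat.gcd m m' ∣ n := (Nat.gcd_dvd_left m m').trans hm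
  refine ⟨cD n (Nat.gcd m m'), (le_cD_cD hg hm).mpr (Nat.gcd_dvd_left m m'),
    (le_cD_cD hg hm').mpr (Nat.gcd_dvd_right m m'), ?_⟩
  intro w hwx hwy
  obtain ⟨W, rfl⟩ := isoClasses_exists_rep w
  rcases cls_classify W with ⟨f, hf, hW⟩ | ⟨μ, hμ, hW⟩ <;> rw [hW] at hwx hwy ⊢
  · refine (le_cC_cD hf hg).mpr ?_
    rcases (le_cC_cD hf hm).mp hwx with h1 | h1
    · rcases (le_cC_cD hf hm').mp hwy with h2 | h2
      · exact Or.inl (Nat.dvd_gcd h1 h2)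
      · exact Or.inr h2
    · exact Or.inr h1
  · exact (le_cD_cD hμ hg).mpr
      (Nat.dvd_gcd ((le_cD_cD hμ hm).mp hwx) ((le_cD_cD hμ hm').mp hwy))

lemma lubDD {m m' : ℕ} (hm : m ∣ n) (hm' : m' ∣ n) :
    IsoClasses.HasLUB (cD n m) (cD n m') := by
  have hl : Nat.lcm m m' ∣ n := Nat.lcm_dvd hm hm'
  refine ⟨cD n (Nat.lcm m m'), (le_cD_cD hm hl).mpr (Nat.dvd_lcm_left m m'),
    (le_cD_cD hm' hl).mpr (Nat.dvd_lcm_right m m'), ?_⟩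
  intro w hwx hwy
  obtain ⟨W, rfl⟩ := isoClasses_exists_rep w
  rcases cls_classify W with ⟨f, hf, hW⟩ | ⟨μ, hμ, hW⟩ <;> rw [hW] at hwx hwy ⊢
  · obtain ⟨hm1, h2f⟩ := (le_cD_cC hm hf).mp hwx
    obtain ⟨hm'1, -⟩ := (le_cD_cC hm' hf).mp hwy
    subst hm1; subst hm'1
    exact (le_cD_cC hl hf).mpr ⟨Nat.lcm_self 1, h2f⟩
  · exact (le_cD_cD hl hμ).mpr
      (Nat.lcm_dvd ((le_cD_cD hm hμ).mp hwx) ((le_cD_cD hm' hμ).mp hwy))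

lemma glbCD (h : Odd n ∨ ∃ k, n = 2 ^ k) (hn : 2 ≤ n) {d m : ℕ} (hd : d ∣ n)
    (hm : m ∣ n) : IsoClasses.HasGLB (cC n d) (cD n m) := by
  by_cases hc : 2 ∣ d ∧ m = 1
  · obtain ⟨h2d, rfl⟩ := hc
    refine ⟨cD n 1, (le_cD_cC (one_dvd n) hd).mpr ⟨rfl, h2d⟩,
      (le_cD_cD (one_dvd n) (one_dvd n)).mpr dvd_rfl, ?_⟩
    intro w hwx hwy
    obtain ⟨W, rfl⟩ := isoClasses_exists_rep w
    rcases cls_classify W with ⟨f, hf, hW⟩ | ⟨μ, hμ, hW⟩ <;> rw [hW] at hwx hwy ⊢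
    · rcases (le_cC_cD hf (one_dvd n)).mp hwy with h1 | h1
      · exact (le_cC_cD hf (one_dvd n)).mpr (Or.inl h1)
      · exact (le_cC_cD hf (one_dvd n)).mpr (Or.inr h1)
    · obtain ⟨hμ1, -⟩ := (le_cD_cC hμ hd).mp hwx
      subst hμ1
      exact (le_cD_cD (one_dvd n) (one_dvd n)).mpr dvd_rfl
  · have hg : Nat.gcd d m ∣ n := (Nat.gcd_dvd_left d m).trans hd
    have hkey : ∀ f, f ∣ d → f ∣ 2 → f ∣ Nat.gcd d m := by
      intro f hfd hf2
      rcases (Nat.dvd_prime Nat.prime_two).mp hf2 with rfl | rfl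
      · exact one_dvd _
      · have hm1 : m ≠ 1 := fun h1 => hc ⟨hfd, h1⟩
        have hp : ∃ k, n = 2 ^ k := by
          rcases h with ho | hp
          · exact absurd (Nat.odd_iff.mp ho) (by
              obtain ⟨c, hc'⟩ := hfd.trans hd
              omega)
          · exact hp
        exact Nat.dvd_gcd hfd (two_dvd_of_pow2 hp hn hm hm1)
    refine ⟨cC n (Nat.gcd d m), (le_cC_cC hg hd).mpr (Nat.gcd_dvd_left d m),
      (le_cC_cD hg hm).mpr (Or.inl (Nat.gcd_dvd_right d m)), ?_⟩
    intro w hwx hwy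
    obtain ⟨W, rfl⟩ := isoClasses_exists_rep w
    rcases cls_classify W with ⟨f, hf, hW⟩ | ⟨μ, hμ, hW⟩ <;> rw [hW] at hwx hwy ⊢
    · have hfd := (le_cC_cC hf hd).mp hwx
      refine (le_cC_cC hf hg).mpr ?_
      rcases (le_cC_cD hf hm).mp hwy with h1 | h1
      · exact Nat.dvd_gcd hfd h1
      · exact hkey f hfd h1
    · obtain ⟨hμ1, h2d⟩ := (le_cD_cC hμ hd).mp hwx
      exact (le_cD_cC hμ hg).mpr ⟨hμ1, hkey 2 h2d dvd_rfl⟩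

lemma lubCD (h : Odd n ∨ ∃ k, n = 2 ^ k) (hn : 2 ≤ n) {d m : ℕ} (hd : d ∣ n)
    (hm : m ∣ n) : IsoClasses.HasLUB (cC n d) (cD n m) := by
  by_cases hd2 : d ∣ 2
  · exact ⟨cD n m, (le_cC_cD hd hm).mpr (Or.inr hd2),
      (le_cD_cD hm hm).mpr dvd_rfl, fun w _ h2 => h2⟩
  · have hl : Nat.lcm d m ∣ n := Nat.lcm_dvd hd hm
    have hgen : ∀ (hcase : ∀ (f : ℕ), f ∣ n → cD n m ≤ cC n f → cC n d ≤ cC n f →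
        cD n (Nat.lcm d m) ≤ cC n f), IsoClasses.HasLUB (cC n d) (cD n m) := by
      intro hcase
      refine ⟨cD n (Nat.lcm d m), (le_cC_cD hd hl).mpr (Or.inl (Nat.dvd_lcm_left d m)),
        (le_cD_cD hm hl).mpr (Nat.dvd_lcm_right d m), ?_⟩
      intro w hwx hwy
      obtain ⟨W, rfl⟩ := isoClasses_exists_rep w
      rcases cls_classify W with ⟨f, hf, hW⟩ | ⟨μ, hμ, hW⟩ <;> rw [hW] at hwx hwy ⊢
      · exact hcase f hf hwy hwx
      · have hdμ : d ∣ μ := by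
          rcases (le_cC_cD hd hμ).mp hwx with h1 | h1
          · exact h1
          · exact absurd h1 hd2
        exact (le_cD_cD hl hμ).mpr (Nat.lcm_dvd hdμ ((le_cD_cD hm hμ).mp hwy))
    rcases h with ho | hp
    · -- n odd
      refine hgen ?_
      intro f hf hwy _
      obtain ⟨-, h2f⟩ := (le_cD_cC hm hf).mp hwy
      exfalso
      obtain ⟨c, hc'⟩ := h2f.trans hf
      have := Nat.odd_iff.mp ho
      omega
    · by_cases hm1 : m = 1
      · subst hm1
        have h2d : 2 ∣ d := two_dvd_of_pow2 hp hn hd (fun h1 => hd2 (h1 ▸ one_dvd 2))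
        refine ⟨cC n d, (le_cC_cC hd hd).mpr dvd_rfl,
          (le_cD_cC (one_dvd n) hd).mpr ⟨rfl, h2d⟩, ?_⟩
        intro w hwx hwy
        obtain ⟨W, rfl⟩ := isoClasses_exists_rep w
        rcases cls_classify W with ⟨f, hf, hW⟩ | ⟨μ, hμ, hW⟩ <;> rw [hW] at hwx hwy ⊢
        · exact (le_cC_cC hd hf).mpr ((le_cC_cC hd hf).mp hwx)
        · have hdμ : d ∣ μ := by
            rcases (le_cC_cD hd hμ).mp hwx with h1 | h1
            · exact h1
            · exact absurd h1 hd2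
          exact (le_cC_cD hd hμ).mpr (Or.inl hdμ)
      · refine hgen ?_
        intro f hf hwy _
        obtain ⟨hm1', -⟩ := (le_cD_cC hm hf).mp hwy
        exact absurd hm1' hm1

end Lattice

theorem lattice_of_good {n : ℕ} (hn : 2 ≤ n) (h : Odd n ∨ ∃ k : ℕ, n = 2 ^ k) :
    IsoClasses.IsLattice (DihedralGroup n) := by
  haveI : NeZero n := ⟨by omega⟩
  intro x y
  obtain ⟨X, rfl⟩ := isoClasses_exists_rep x
  obtain ⟨Y, rfl⟩ := isoClasses_exists_rep y
  rcases cls_classify X with ⟨d, hd, hX⟩ | ⟨m, hm, hX⟩ <;>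
    rcases cls_classify Y with ⟨e, he, hY⟩ | ⟨m', hm', hY⟩ <;> rw [hX, hY]
  · exact ⟨glbCC hd he, lubCC h hd he⟩
  · exact ⟨glbCD h hn hd hm', lubCD h hn hd hm'⟩
  · exact ⟨hasGLB_symm (glbCD h hn he hm), hasLUB_symm (lubCD h hn he hm)⟩
  · exact ⟨glbDD hm hm', lubDD hm hm'⟩

theorem not_lattice_of_bad {n : ℕ} (hn : 2 ≤ n) (hodd : ¬ Odd n)
    (hpow : ¬ ∃ k : ℕ, n = 2 ^ k) : ¬ IsoClasses.IsLattice (DihedralGroup n) := by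
  haveI : NeZero n := ⟨by omega⟩
  intro hl
  have h2 : 2 ∣ n := by
    rcases Nat.even_or_odd n with he | ho
    · exact he.two_dvd
    · exact absurd ho hodd
  set p := ((n / 2 ^ n.factorization 2)).minFac with hpdef
  have hb : (n / 2 ^ n.factorization 2) ∣ n := Nat.ordCompl_dvd n 2
  have hbne : (n / 2 ^ n.factorization 2) ≠ 1 := by
    intro h1
    refine hpow ⟨n.factorization 2, ?_⟩
    have h3 := Nat.ordProj_mul_ordCompl_eq_self n 2
    rw [h1, mul_one] at h3
    exact h3.symm
  have hp : p.Prime := Nat.minFac_prime hbne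
  have hpn : p ∣ n := (Nat.minFac_dvd _).trans hb
  have hp2 : p ≠ 2 := by
    intro h2'
    have hdvd := Nat.minFac_dvd ((n / 2 ^ n.factorization 2))
    rw [← hpdef, h2'] at hdvd
    exact (Nat.not_dvd_ordCompl Nat.prime_two (by omega : n ≠ 0)) hdvd
  have hp3 : 3 ≤ p := by
    have := hp.two_le
    omega
  have hcop : Nat.Coprime 2 p := (Nat.coprime_primes Nat.prime_two hp).mpr (fun h => hp2 h.symm)
  have h2pn : 2 * p ∣ n := hcop.mul_dvd_of_dvd_of_dvd h2 hpn
  obtain ⟨z, hxz, hyz, hmin⟩ := (hl (cD n 1) (cC n p)).2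
  have hz1 : z ≤ cC n (2 * p) :=
    hmin _ ((le_cD_cC (one_dvd n) h2pn).mpr ⟨rfl, dvd_mul_right 2 p⟩)
      ((le_cC_cC hpn h2pn).mpr (dvd_mul_left p 2))
  have hz2 : z ≤ cD n p :=
    hmin _ ((le_cD_cD (one_dvd n) hpn).mpr (one_dvd p))
      ((le_cC_cD hpn hpn).mpr (Or.inl dvd_rfl))
  obtain ⟨Z, rfl⟩ := isoClasses_exists_rep z
  rcases cls_classify Z with ⟨f, hf, hZ⟩ | ⟨μ, hμ, hZ⟩ <;> rw [hZ] at hxz hyz hz1 hz2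
  · have h2f : 2 ∣ f := ((le_cD_cC (one_dvd n) hf).mp hxz).2
    have hpf : p ∣ f := (le_cC_cC hpn hf).mp hyz
    have h2pf : 2 * p ∣ f := hcop.mul_dvd_of_dvd_of_dvd h2f hpf
    rcases (le_cC_cD hf hpn).mp hz2 with hfp | hf2
    · have hple := Nat.le_of_dvd (by omega) (h2pf.trans hfp)
      omega
    · have hple := Nat.le_of_dvd (by omega) (hpf.trans hf2)
      omega
  · obtain ⟨hμ1, -⟩ := (le_cD_cC hμ h2pn).mp hz1
    subst hμ1
    rcases (le_cC_cD hpn (one_dvd n)).mp hyz with h1 | h1 <;>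
      { have := Nat.le_of_dvd (by omega) h1; omega }

theorem isoClasses_dihedral_isLattice_iff' (n : ℕ) (hn : 2 ≤ n) :
    IsoClasses.IsLattice (DihedralGroup n) ↔ (Odd n ∨ ∃ k : ℕ, n = 2 ^ k) := by
  constructor
  · intro hl
    by_contra hcon
    push_neg at hcon
    exact not_lattice_of_bad hn hcon.1 (fun ⟨k, hk⟩ => (hcon.2 k) hk) hl
  · exact lattice_of_good hn

end DihedralLattice

/-- For `n ≥ 2`, the poset `IsoClasses (DihedralGroup n)` is a lattice
if and only if `n` is odd or `n` is a power of `2`. -/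
theorem isoClasses_dihedral_isLattice_iff (n : ℕ) (hn : 2 ≤ n) :
    IsoClasses.IsLattice (DihedralGroup n) ↔ (Odd n ∨ ∃ k : ℕ, n = 2 ^ k) :=
  DihedralLattice.isoClasses_dihedral_isLattice_iff' n hn
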